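/- Under D_ε, the 1-sparse predictor h(X) = (1−4ε)X + 2ε achieves expected squared loss E[(h(X)−Y)²] = 2ε − 4ε² and satisfies equalized odds. -/
import Mathlib


/-- The joint pmf of `(X, A, Y)` under `D_ε`. -/
noncomputable def pD (ε : ℝ) (x a y : Bool) : ℝ :=
  (1 / 2) * (if a = y then 1 - ε else ε) * (if x = y then 1 - 2 * ε else 2 * ε)

/-- `{0,1}`-valued random variables as reals. -/
def ind (b : Bool) : ℝ := if b then 1 else 0

/-- Under `D_ε` with `0 < ε < 1/4`, the 1-sparse predictor `h(X) = (1 - 4ε) X + 2ε` has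
expected squared loss exactly `2ε - 4ε²` and satisfies equalized odds. -/
theorem stmt17 (ε : ℝ) (hε0 : 0 < ε) (hε1 : ε < 1 / 4) :
    (∑ x : Bool, ∑ a : Bool, ∑ y : Bool,
        pD ε x a y * ((1 - 4 * ε) * ind x + 2 * ε - ind y) ^ 2)
      = 2 * ε - 4 * ε ^ 2 ∧
    (∀ x y : Bool,
      pD ε x false y / (∑ x' : Bool, pD ε x' false y)
        = pD ε x true y / (∑ x' : Bool, pD ε x' true y)) := by
  constructor
  · simp only [Fintype.sum_bool, pD, ind]
    norm_num
    ring
  · intro x y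
    have hε : (1 : ℝ) - ε ≠ 0 := by linarith
    have hε' : ε ≠ 0 := ne_of_gt hε0
    cases x <;> cases y <;>
      simp only [Fintype.sum_bool, pD] <;> norm_num <;> rw [div_eq_div_iff (by linarith) (by linarith)] <;> ring
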